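/- The matrix A_w is invertible whenever all entries corresponding to the symbol ⋆_2 are nonzero: its columns can be permuted so that the ⋆_2 entries lie on the diagonal and the resulting matrix is triangular; consequently det(A_w) = ± the product of the ⋆_2 entries up to sign, and in particular is nonzero. -/
import Mathlib


/-- `rvecS w j`: the rank of `w⁻¹ j` counted from the smallest among
`w⁻¹ j, ..., w⁻¹ (m-1)` (0-based indexing); this is the convention under which the
first row of `A_w` has its stars in columns `r_1` and `r_1 + 1` (1-based). -/
def rvecS {m : ℕ} (w : Equiv.Perm (Fin m)) (j : Fin m) : ℕ :=
  (Finset.univ.filter (fun k : Fin m => j ≤ k ∧ w⁻¹ k ≤ w⁻¹ j)).card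

/-- The column (0-based) of the distinguished entry `⋆₂` in row `i` of `A_w`:
column `w⁻¹(i) + 1` (1-based) for `i ≤ n - 1`, and column `1` for the last row. -/
def star2 {m : ℕ} (w : Equiv.Perm (Fin m)) (i : Fin (m + 1)) : Fin (m + 1) :=
  if h : (i : ℕ) < m then Fin.succ (w⁻¹ ⟨(i : ℕ), h⟩) else 0

/-- The column (0-based) of the entry `⋆₁` in row `i` of `A_w`: the rightmost column
to the left of the `⋆₂`-column of row `i` containing no `⋆₂` in any earlier row. -/
def star1col {m : ℕ} (w : Equiv.Perm (Fin m)) (i : Fin (m + 1)) : ℕ :=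
  ((Finset.range (star2 w i : ℕ)).filter
    (fun c => ∀ i' : Fin (m + 1), i' < i → (star2 w i' : ℕ) ≠ c)).sup id

/-- The support (pattern of possibly-nonzero entries) of the matrix `A_w`. -/
def AwSupp {m : ℕ} (w : Equiv.Perm (Fin m)) (i c : Fin (m + 1)) : Prop :=
  c = star2 w i ∨ ((i : ℕ) < m ∧ (c : ℕ) = star1col w i)

/-- The rank of the submatrix of `A` on rows `S` and the first `j` columns. -/
noncomputable def rkSub {n : ℕ} (A : Matrix (Fin n) (Fin n) ℂ) (S : Finset (Fin n))
    (j : ℕ) : ℕ :=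
  (Matrix.of (fun (i : {i : Fin n // i ∈ S}) (k : {k : Fin n // (k : ℕ) < j}) =>
    A i.1 k.1)).rank

/-- If all `⋆₂` entries of a matrix with the support pattern of `A_w` are nonzero, then
its columns may be permuted so that the `⋆₂` entries lie on the diagonal and the result
is upper triangular; consequently `det = ±` the product of the `⋆₂` entries, and in
particular the matrix is invertible. -/
lemma star2_inj {m : ℕ} (w : Equiv.Perm (Fin m)) : Function.Injective (star2 w) := by
  intro i i' h
  unfold star2 at h
  split_ifs at h with h1 h2 h2
  · have := Fin.succ_injective _ h
    have := w⁻¹.injective this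
    exact Fin.ext (by simpa using congrArg Fin.val this)
  · exact absurd h (Fin.succ_ne_zero _)
  · exact absurd h.symm (Fin.succ_ne_zero _)
  · have hi : (i : ℕ) = m := le_antisymm (Nat.lt_succ_iff.mp i.isLt) (le_of_not_gt h1)
    have hi' : (i' : ℕ) = m := le_antisymm (Nat.lt_succ_iff.mp i'.isLt) (le_of_not_gt h2)
    exact Fin.ext (hi.trans hi'.symm)

theorem stmt13 (m : ℕ) (w : Equiv.Perm (Fin m))
    (A : Matrix (Fin (m + 1)) (Fin (m + 1)) ℂ)
    (hzero : ∀ i c, ¬ AwSupp w i c → A i c = 0)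
    (hstar2 : ∀ i, A i (star2 w i) ≠ 0) :
    (∃ σ : Equiv.Perm (Fin (m + 1)), (∀ i, σ i = star2 w i) ∧
      ∀ i j : Fin (m + 1), j < i → A i (σ j) = 0) ∧
    (A.det = ∏ i, A i (star2 w i) ∨ A.det = - ∏ i, A i (star2 w i)) ∧
    A.det ≠ 0 := by
  have hbij : Function.Bijective (star2 w) :=
    Finite.injective_iff_bijective.mp (star2_inj w)
  set σ : Equiv.Perm (Fin (m + 1)) := Equiv.ofBijective _ hbij with hσ
  have hσ' : ∀ i, σ i = star2 w i := fun i => rfl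
  have htri : ∀ i j : Fin (m + 1), j < i → A i (σ j) = 0 := by
    intro i j hji
    apply hzero
    rintro (h | ⟨him, h⟩)
    · exact absurd (star2_inj w h) (ne_of_lt hji)
    · -- σ j = star2 w j; (star2 w j : ℕ) = star1col w i
      have hjm : (j : ℕ) < m := lt_of_lt_of_le hji (Nat.lt_succ_iff.mp i.isLt)
      have hne0 : star2 w j ≠ 0 := by
        unfold star2; rw [dif_pos hjm]; exact Fin.succ_ne_zero _
      set F := ((Finset.range (star2 w i : ℕ)).filter
        (fun c => ∀ i' : Fin (m + 1), i' < i → (star2 w i' : ℕ) ≠ c)) with hF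
      rcases F.eq_empty_or_nonempty with he | hne
      · have : star1col w i = 0 := by
          unfold star1col; rw [← hF, he]; rfl
        rw [this] at h
        exact hne0 (Fin.ext h)
      · obtain ⟨b, hb, hbe⟩ := Finset.exists_mem_eq_sup F hne id
        have : star1col w i = b := by unfold star1col; rw [← hF, hbe]; rfl
        rw [this] at h
        have := (Finset.mem_filter.mp hb).2 j hji
        exact this h
  refine ⟨⟨σ, hσ', htri⟩, ?_⟩
  have hdet : (A.submatrix id σ).det = Equiv.Perm.sign σ * A.det :=
    Matrix.det_permute' σ A
  have hbt : (A.submatrix id ⇑σ).BlockTriangular id := fun i j h => htri i j h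
  have hut : (A.submatrix id σ).det = ∏ i, A i (star2 w i) := by
    rw [Matrix.det_of_upperTriangular hbt]
    exact Finset.prod_congr rfl (fun i _ => rfl)
  have hprod : (∏ i, A i (star2 w i)) ≠ 0 :=
    Finset.prod_ne_zero_iff.mpr (fun i _ => hstar2 i)
  have hAdet : A.det = (Equiv.Perm.sign σ : ℂ) * ∏ i, A i (star2 w i) := by
    have hs : ((Equiv.Perm.sign σ : ℤ) : ℂ) * (Equiv.Perm.sign σ : ℤ) = 1 := by
      rcases Int.units_eq_one_or (Equiv.Perm.sign σ) with h | h <;> rw [h] <;> norm_num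
    calc A.det = ((Equiv.Perm.sign σ : ℤ) : ℂ) * ((Equiv.Perm.sign σ : ℤ) * A.det) := by
          rw [← mul_assoc, hs, one_mul]
      _ = (Equiv.Perm.sign σ : ℂ) * ∏ i, A i (star2 w i) := by
          rw [← hdet, hut]
  constructor
  · rcases Int.units_eq_one_or (Equiv.Perm.sign σ) with h | h
    · left; rw [hAdet, h]; norm_num
    · right; rw [hAdet, h]; norm_num
  · rw [hAdet]
    apply mul_ne_zero _ hprod
    rcases Int.units_eq_one_or (Equiv.Perm.sign σ) with h | h <;> rw [h] <;> norm_num
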